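/- Under the separation condition sup_n κR_n/(τ s_n) = M < 1, the map Φ : Ξ → ℝ^p is injective, hence a homeomorphism onto its image C_{s,𝒟}. -/
import Mathlib

set_option maxHeartbeats 1000000


/-- Under the separation condition `sup_n κRₙ/(τ sₙ) = M < 1`, the map
`Φ : Ξ → ℝ^p` is injective, hence a homeomorphism onto its image `C_{s,𝒟}`
(equivalently, a topological embedding). -/
theorem stmt_2 (p N : ℕ) (hN : 0 < N)
    (s : ℕ → ℝ) (hs : ∀ n, 0 < s n) (hsum : Summable s)
    (d : ℕ → Fin N → EuclideanSpace ℝ (Fin p))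
    (hzero : ∀ n, d n ⟨0, hN⟩ = 0)
    (κ τ : ℝ) (hτ : 0 < τ)
    (hκ : ∀ (n : ℕ) (i j : Fin N), i ≠ j → ‖d n i - d n j‖ ≤ κ)
    (hτd : ∀ (n : ℕ) (i j : Fin N), i ≠ j → τ ≤ ‖d n i - d n j‖)
    (R : ℕ → ℝ) (hR : ∀ n, R n = ∑' i, s (n + 1 + i))
    (M : ℝ) (hM : M < 1) (hsep : ∀ n, κ * R n ≤ M * (τ * s n)) :
    Function.Injective (fun σ : ℕ → Fin N => ∑' i, s i • d i (σ i)) ∧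
      Topology.IsEmbedding (fun σ : ℕ → Fin N => ∑' i, s i • d i (σ i)) := by
  have hdb : ∀ (n : ℕ) (j : Fin N), ‖d n j‖ ≤ max κ 0 := by
    intro n j
    by_cases hj : j = ⟨0, hN⟩
    · simp [hj, hzero n]
    · have := hκ n j ⟨0, hN⟩ hj
      rw [hzero n, sub_zero] at this
      exact this.trans (le_max_left _ _)
  have hsummable : ∀ σ : ℕ → Fin N, Summable (fun i => s i • d i (σ i)) := by
    intro σ
    apply Summable.of_norm
    apply Summable.of_nonneg_of_le (fun i => norm_nonneg _)
      (fun i => ?_) (hsum.mul_right (max κ 0))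
    rw [norm_smul, Real.norm_eq_abs, abs_of_pos (hs i)]
    exact mul_le_mul_of_nonneg_left (hdb i (σ i)) (hs i).le
  have hinj : Function.Injective
      (fun σ : ℕ → Fin N => ∑' i, s i • d i (σ i)) := by
    intro σ σ' hΦ
    by_contra hne
    have hex : ∃ n, σ n ≠ σ' n := Function.ne_iff.mp hne
    obtain ⟨n, hnd, hlt⟩ : ∃ n, σ n ≠ σ' n ∧ ∀ i < n, σ i = σ' i :=
      ⟨Nat.find hex, Nat.find_spec hex, fun i hi => by
        by_contra h; exact Nat.find_min hex hi h⟩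
    have hκτ : τ ≤ κ := (hτd n _ _ hnd).trans (hκ n _ _ hnd)
    obtain ⟨f, hf⟩ : ∃ f : ℕ → EuclideanSpace ℝ (Fin p),
        f = fun i => s i • (d i (σ i) - d i (σ' i)) := ⟨_, rfl⟩
    have hfz : ∀ i < n, f i = 0 := fun i hi => by
      simp [hf, hlt i hi]
    have hfb : ∀ i, ‖f i‖ ≤ s i * κ := by
      intro i
      by_cases h : σ i = σ' i
      · simp only [hf, h, sub_self, smul_zero, norm_zero]
        exact mul_nonneg (hs i).le (hτ.le.trans hκτ)
      · rw [hf, norm_smul, Real.norm_eq_abs, abs_of_pos (hs i)]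
        exact mul_le_mul_of_nonneg_left (hκ i _ _ h) (hs i).le
    have hfsum : Summable f := by
      simpa [hf, smul_sub] using (hsummable σ).sub (hsummable σ')
    have hfnsum : Summable (fun i => ‖f i‖) :=
      Summable.of_nonneg_of_le (fun i => norm_nonneg _) hfb
        (hsum.mul_right κ)
    have htot : ∑' i, f i = 0 := by
      have h1 : ∑' i, f i = (∑' i, s i • d i (σ i)) - ∑' i, s i • d i (σ' i) := by
        simp only [hf, smul_sub]
        exact Summable.tsum_sub (hsummable σ) (hsummable σ')
      rw [h1, sub_eq_zero]
      exact hΦ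
    have hsplit : ∑' i, f i = (∑ i ∈ Finset.range (n+1), f i) + ∑' i, f (i + (n+1)) :=
      (Summable.sum_add_tsum_nat_add (n+1) hfsum).symm
    have hsumfin : ∑ i ∈ Finset.range (n+1), f i = f n := by
      rw [Finset.sum_range_succ,
        Finset.sum_eq_zero (fun i hi => hfz i (Finset.mem_range.mp hi))]
      simp
    have hkey : f n = - ∑' i, f (i + (n+1)) := by
      rw [hsplit, hsumfin] at htot
      exact eq_neg_of_add_eq_zero_left htot
    have hlow : s n * τ ≤ ‖f n‖ := by
      rw [hf, norm_smul, Real.norm_eq_abs, abs_of_pos (hs n)]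
      exact mul_le_mul_of_nonneg_left (hτd n _ _ hnd) (hs n).le
    have hup : ‖f n‖ ≤ κ * R n := by
      rw [hkey, norm_neg]
      calc ‖∑' i, f (i + (n+1))‖ ≤ ∑' i, ‖f (i + (n+1))‖ :=
            norm_tsum_le_tsum_norm ((summable_nat_add_iff (n+1)).mpr hfnsum)
        _ ≤ ∑' i, s (i + (n+1)) * κ := by
            apply Summable.tsum_le_tsum (fun i => hfb _)
              ((summable_nat_add_iff (n+1)).mpr hfnsum)
              (((summable_nat_add_iff (n+1)).mpr hsum).mul_right κ)
        _ = κ * R n := by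
            rw [tsum_mul_right, hR n, mul_comm]
            congr 1
            exact tsum_congr (fun i => by rw [add_comm])
    have : s n * τ ≤ M * (τ * s n) := hlow.trans (hup.trans (hsep n))
    have h2 : M * (τ * s n) < 1 * (τ * s n) :=
      mul_lt_mul_of_pos_right hM (mul_pos hτ (hs n))
    rw [one_mul] at h2
    nlinarith
  refine ⟨hinj, ?_⟩
  have hcont : Continuous (fun σ : ℕ → Fin N => ∑' i, s i • d i (σ i)) := by
    apply continuous_tsum (u := fun i => s i * max κ 0)
    · intro i
      exact ((continuous_of_discreteTopology (f := d i)).comp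
        (continuous_apply i)).const_smul (s i)
    · exact hsum.mul_right (max κ 0)
    · intro i σ
      rw [norm_smul, Real.norm_eq_abs, abs_of_pos (hs i)]
      exact mul_le_mul_of_nonneg_left (hdb i (σ i)) (hs i).le
  exact (hcont.isClosedEmbedding hinj).isEmbedding
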